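/- Let H be a 3-uniform hypergraph with no linear cycle, T a linear tree in H, and v ∈ V(H) \ V(T) a vertex strongly associated to two hyperedges h_1, h_2 of T. Then h_1 ∩ h_2 ≠ ∅. -/
import Mathlib


/-- A linear cycle of length `k ≥ 3` in a 3-uniform hypergraph with edge set `E`:
an alternating cyclic sequence of distinct vertices `v i` and distinct hyperedges `h i`
with `h i ∩ h (i+1) = {v (i+1)}` and non-consecutive hyperedges disjoint. -/
def IsLinearCycle {V : Type*} [DecidableEq V] (E : Finset (Finset V)) (k : ℕ)
    (v : ZMod k → V) (h : ZMod k → Finset V) : Prop :=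
  3 ≤ k ∧ Function.Injective v ∧ Function.Injective h ∧
    (∀ i, h i ∈ E) ∧ (∀ i, h i ∩ h (i + 1) = {v (i + 1)}) ∧
    (∀ i j, i ≠ j → i + 1 ≠ j → j + 1 ≠ i → h i ∩ h j = ∅)

/-- `E` contains a linear cycle. -/
def HasLinearCycle {V : Type*} [DecidableEq V] (E : Finset (Finset V)) : Prop :=
  ∃ (k : ℕ) (v : ZMod k → V) (h : ZMod k → Finset V), IsLinearCycle E k v h

/-- The degree of a vertex: the number of hyperedges containing it. -/
def hDegree {V : Type*} [DecidableEq V] (E : Finset (Finset V)) (v : V) : ℕ :=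
  (E.filter (fun e => v ∈ e)).card

/-- The support of a vertex `v` in a hyperedge `h`: the pairs of `h` that form a
hyperedge together with `v`. -/
def hSupport {V : Type*} [DecidableEq V] (E : Finset (Finset V)) (h : Finset V) (v : V) :
    Finset (Finset V) :=
  (h.powersetCard 2).filter (fun p => insert v p ∈ E)

/-- A pair of vertices is thick if at least two hyperedges contain it. -/
def ThickPair {V : Type*} [DecidableEq V] (E : Finset (Finset V)) (a b : V) : Prop :=
  2 ≤ (E.filter (fun e => a ∈ e ∧ b ∈ e)).card

/-- A hyperedge is thick if each of its pairs is contained in at least two hyperedges. -/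
def ThickEdge {V : Type*} [DecidableEq V] (E : Finset (Finset V)) (h : Finset V) : Prop :=
  ∀ p ∈ h.powersetCard 2, 2 ≤ (E.filter (fun e => p ⊆ e)).card

/-- `v ∉ h` is strongly associated to the hyperedge `h` if at least two of the 3-sets
formed by `v` and a pair of `h` are hyperedges. -/
def StronglyAssoc {V : Type*} [DecidableEq V] (E : Finset (Finset V)) (h : Finset V) (v : V) :
    Prop :=
  v ∉ h ∧ 2 ≤ (hSupport E h v).card

/-- A linear path of length `k` (given by its sequence of hyperedges): consecutive
hyperedges meet in exactly one vertex, non-consecutive ones are disjoint. -/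
def IsLinearPath {V : Type*} [DecidableEq V] (E : Finset (Finset V)) (k : ℕ)
    (h : Fin k → Finset V) : Prop :=
  Function.Injective h ∧ (∀ i, h i ∈ E) ∧
    (∀ i j : Fin k, (i : ℕ) + 1 = (j : ℕ) → (h i ∩ h j).card = 1) ∧
    (∀ i j : Fin k, (i : ℕ) + 2 ≤ (j : ℕ) → h i ∩ h j = ∅)

/-- A linear tree with vertex set `S` and edge set `T`: built from a single vertex by
repeatedly adding hyperedges meeting the current vertex set in exactly one vertex. -/
inductive IsLinearTree {V : Type*} [DecidableEq V] : Finset V → Finset (Finset V) → Prop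
  | single (v : V) : IsLinearTree {v} ∅
  | extend {S : Finset V} {T : Finset (Finset V)} (e : Finset V) :
      IsLinearTree S T → e.card = 3 → (e ∩ S).card = 1 → IsLinearTree (S ∪ e) (insert e T)

section AuxLinearTree

variable {V : Type*} [DecidableEq V]


lemma tree_subset {S : Finset V} {T : Finset (Finset V)} (hT : IsLinearTree S T) :
    ∀ e ∈ T, e ⊆ S := by
  induction hT with
  | single v => simp
  | extend e' ht hc3 hc1 ih =>
    intro f hf
    rcases Finset.mem_insert.mp hf with rfl | hf
    · exact Finset.subset_union_right
    · exact (ih f hf).trans Finset.subset_union_left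

lemma tree_linear {S : Finset V} {T : Finset (Finset V)} (hT : IsLinearTree S T) :
    ∀ e ∈ T, ∀ f ∈ T, e ≠ f → (e ∩ f).card ≤ 1 := by
  induction hT with
  | single v => simp
  | extend e' ht hc3 hc1 ih =>
    intro e he f hf hnef
    rcases Finset.mem_insert.mp he with he2 | he2
    · rcases Finset.mem_insert.mp hf with hf2 | hf2
      · exact absurd (he2.trans hf2.symm) hnef
      · subst he2
        exact le_trans (Finset.card_le_card
          (Finset.inter_subset_inter (Finset.Subset.refl _) (tree_subset ht f hf2))) (le_of_eq hc1)
    · rcases Finset.mem_insert.mp hf with hf2 | hf2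
      · subst hf2
        rw [Finset.inter_comm]
        exact le_trans (Finset.card_le_card
          (Finset.inter_subset_inter (Finset.Subset.refl _) (tree_subset ht e he2))) (le_of_eq hc1)
      · exact ih e he2 f hf2 hnef

lemma tree_empty {S : Finset V} (hT : IsLinearTree S ∅) : ∃ w, S = {w} := by
  have key : ∀ (T : Finset (Finset V)), IsLinearTree S T → T = ∅ → ∃ w, S = {w} := by
    intro T hT
    induction hT with
    | single v => exact fun _ => ⟨v, rfl⟩
    | extend e' ht hc3 hc1 ih => intro h; simp at h
  exact key ∅ hT rfl

lemma tree_cover {S : Finset V} {T : Finset (Finset V)} (hT : IsLinearTree S T) :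
    T.Nonempty → ∀ u ∈ S, ∃ f ∈ T, u ∈ f := by
  induction hT with
  | single v => rintro ⟨f, hf⟩; simp at hf
  | @extend S' T' e' ht hc3 hc1 ih =>
    intro _ u hu
    rcases Finset.mem_union.mp hu with hu | hu
    · rcases Finset.eq_empty_or_nonempty T' with h | h
      · subst h
        obtain ⟨w, hw⟩ := tree_empty ht
        subst hw
        have hwe : w ∈ e' := by
          have : (e' ∩ {w}).Nonempty := by
            rw [← Finset.card_pos, hc1]; norm_num
          obtain ⟨x, hx⟩ := this
          rcases Finset.mem_inter.mp hx with ⟨hx1, hx2⟩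
          rwa [Finset.mem_singleton.mp hx2] at hx1
        rw [Finset.mem_singleton.mp hu]
        exact ⟨e', Finset.mem_insert_self _ _, hwe⟩
      · obtain ⟨f, hf, huf⟩ := ih h u hu
        exact ⟨f, Finset.mem_insert_of_mem hf, huf⟩
    · exact ⟨e', Finset.mem_insert_self _ _, hu⟩

/-- Existence of a walk between two edges of a linear tree, phrased over ℕ. -/
def WalkPred (T : Finset (Finset V)) (a b : Finset V) (n : ℕ) : Prop :=
  ∃ g : ℕ → Finset V, g 0 = a ∧ g n = b ∧ (∀ i ≤ n, g i ∈ T) ∧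
    ∀ i < n, (g i ∩ g (i + 1)).Nonempty

lemma walk_symm {T : Finset (Finset V)} {a b : Finset V} {n : ℕ} (h : WalkPred T a b n) :
    WalkPred T b a n := by
  obtain ⟨g, h0, hn, hm, ha⟩ := h
  refine ⟨fun i => g (n - i), by simpa using hn, by simpa using h0,
    fun i _ => hm _ (Nat.sub_le _ _), fun i hi => ?_⟩
  have := ha (n - (i + 1)) (by omega)
  rw [show n - (i + 1) + 1 = n - i by omega] at this
  rw [Finset.inter_comm]
  exact this

lemma walk_mono {T T' : Finset (Finset V)} (hTT : T ⊆ T') {a b : Finset V} {n : ℕ}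
    (h : WalkPred T a b n) : WalkPred T' a b n := by
  obtain ⟨g, h0, hn, hm, ha⟩ := h
  exact ⟨g, h0, hn, fun i hi => hTT (hm i hi), ha⟩

lemma tree_walk {S : Finset V} {T : Finset (Finset V)} (hT : IsLinearTree S T) :
    ∀ e ∈ T, ∀ f ∈ T, ∃ n, WalkPred T e f n := by
  -- first: walks from the new edge to any old edge
  induction hT with
  | single v => intro e he; simp at he
  | @extend S' T' e' ht hc3 hc1 ih =>
    have hstep : ∀ f ∈ T', ∃ n, WalkPred (insert e' T') e' f n := by
      intro f hf
      have hT'ne : T'.Nonempty := ⟨f, hf⟩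
      have : (e' ∩ S').Nonempty := by rw [← Finset.card_pos, hc1]; norm_num
      obtain ⟨u, hu⟩ := this
      rcases Finset.mem_inter.mp hu with ⟨hue, huS⟩
      obtain ⟨f', hf', huf'⟩ := tree_cover ht hT'ne u huS
      obtain ⟨n, g, h0, hn, hm, hadj⟩ := ih f' hf' f hf
      refine ⟨n + 1, fun i => if i = 0 then e' else g (i - 1), by simp, by simp [hn],
        fun i hi => ?_, fun i hi => ?_⟩
      · by_cases h0' : i = 0
        · simp [h0']
        · simp only [h0', if_neg]
          exact Finset.mem_insert_of_mem (hm _ (by omega))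
      · by_cases h0' : i = 0
        · subst h0'
          simp only [if_pos rfl, if_neg one_ne_zero]
          exact ⟨u, Finset.mem_inter.mpr ⟨hue, by simpa [h0] using huf'⟩⟩
        · simp only [h0', if_neg, Nat.succ_ne_zero]
          rw [show i + 1 - 1 = (i - 1) + 1 by omega]
          exact hadj (i - 1) (by omega)
    intro e he f hf
    rcases Finset.mem_insert.mp he with he2 | he2
    · rcases Finset.mem_insert.mp hf with hf2 | hf2
      · exact ⟨0, fun _ => e, rfl, hf2 ▸ he2 ▸ rfl, fun i _ => by simpa using he, fun i hi => by omega⟩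
      · subst he2; exact hstep f hf2
    · rcases Finset.mem_insert.mp hf with hf2 | hf2
      · subst hf2
        obtain ⟨n, hw⟩ := hstep e he2
        exact ⟨n, walk_symm hw⟩
      · obtain ⟨n, hw⟩ := ih e he2 f hf2
        exact ⟨n, walk_mono (Finset.subset_insert _ _) hw⟩

end AuxLinearTree

/-- If a vertex outside a linear tree `T` is strongly associated to two hyperedges of
`T`, then those hyperedges meet. -/
theorem strongly_assoc_two_edges_meet {V : Type*} [DecidableEq V] (E : Finset (Finset V))
    (h3 : ∀ e ∈ E, e.card = 3) (hcyc : ¬ HasLinearCycle E)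
    (S : Finset V) (T : Finset (Finset V)) (hT : IsLinearTree S T) (hTE : T ⊆ E)
    (h₁ h₂ : Finset V) (hh1 : h₁ ∈ T) (hh2 : h₂ ∈ T) (hne : h₁ ≠ h₂)
    (v : V) (hvS : v ∉ S) (ha1 : StronglyAssoc E h₁ v) (ha2 : StronglyAssoc E h₂ v) :
    (h₁ ∩ h₂).Nonempty := by
  classical
  obtain ⟨hvh1a, hsupp1⟩ := ha1
  obtain ⟨hvh2a, hsupp2⟩ := ha2
  rw [hSupport] at hsupp1 hsupp2
  by_contra hcon
  have hdisj : h₁ ∩ h₂ = ∅ := Finset.not_nonempty_iff_eq_empty.mp hcon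
  -- pick a supporting pair through a prescribed vertex
  have pick : ∀ h : Finset V, h ∈ T →
      2 ≤ ((h.powersetCard 2).filter (fun p => insert v p ∈ E)).card →
      ∀ u ∈ h, ∃ p, p ⊆ h ∧ p.card = 2 ∧ insert v p ∈ E ∧ u ∈ p := by
    intro h hhT hsupp u hu
    have hc3 : h.card = 3 := h3 h (hTE hhT)
    obtain ⟨p, hp, q, hq, hpq⟩ := Finset.one_lt_card.mp hsupp
    rw [Finset.mem_filter, Finset.mem_powersetCard] at hp hq
    obtain ⟨⟨hpsub, hpcard⟩, hpE⟩ := hp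
    obtain ⟨⟨hqsub, hqcard⟩, hqE⟩ := hq
    by_cases hup : u ∈ p
    · exact ⟨p, hpsub, hpcard, hpE, hup⟩
    · refine ⟨q, hqsub, hqcard, hqE, ?_⟩
      have hinter : (p ∩ q).card ≤ 1 := by
        by_contra hcard
        push_neg at hcard
        have h1 : p ∩ q = p := Finset.eq_of_subset_of_card_le Finset.inter_subset_left
          (by omega)
        have h2 : p ∩ q = q := Finset.eq_of_subset_of_card_le Finset.inter_subset_right
          (by omega)
        exact hpq (h1.symm.trans h2)
      have huni : p ∪ q = h := by
        apply Finset.eq_of_subset_of_card_le (Finset.union_subset hpsub hqsub)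
        have := Finset.card_inter_add_card_union p q
        omega
      have : u ∈ p ∪ q := huni ▸ hu
      rcases Finset.mem_union.mp this with h' | h'
      · exact absurd h' hup
      · exact h'
  -- walks
  have hwalk : ∃ n, WalkPred T h₁ h₂ n := tree_walk hT h₁ hh1 h₂ hh2
  set m := Nat.find hwalk with hm_def
  obtain ⟨g, hg0, hgm, hgmem, hgadj⟩ : WalkPred T h₁ h₂ m := Nat.find_spec hwalk
  have hmin : ∀ n < m, ¬ WalkPred T h₁ h₂ n := fun n hn => Nat.find_min hwalk hn
  -- no consecutive repeats
  have hne_cons : ∀ i < m, g i ≠ g (i + 1) := by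
    intro i hi heq
    apply hmin (m - 1) (by omega)
    refine ⟨fun t => if t ≤ i then g t else g (t + 1), by simp [hg0], ?_, fun t ht => ?_,
      fun t ht => ?_⟩
    · by_cases h' : m - 1 ≤ i
      · have hieq : i = m - 1 := by omega
        simp only [if_pos h']
        rw [← hieq, heq, show i + 1 = m by omega]
        exact hgm
      · simp only [if_neg h']
        rw [show m - 1 + 1 = m by omega]
        exact hgm
    · by_cases h' : t ≤ i
      · simp only [if_pos h']; exact hgmem t (by omega)
      · simp only [if_neg h']; exact hgmem (t + 1) (by omega)
    · by_cases h' : t < i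
      · simp only [if_pos (le_of_lt h'), if_pos (by omega : t + 1 ≤ i)]
        exact hgadj t (by omega)
      · by_cases h'' : t = i
        · subst h''
          simp only [if_pos le_rfl, if_neg (by omega : ¬ t + 1 ≤ t)]
          rw [heq]
          exact hgadj (t + 1) (by omega)
        · simp only [if_neg (by omega : ¬ t ≤ i), if_neg (by omega : ¬ t + 1 ≤ i)]
          exact hgadj (t + 1) (by omega)
  -- non-consecutive disjoint
  have hfar : ∀ i j, j ≤ m → i + 2 ≤ j → g i ∩ g j = ∅ := by
    intro i j hjm hij
    by_contra hcon'
    have hnon : (g i ∩ g j).Nonempty := Finset.nonempty_iff_ne_empty.mpr hcon'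
    set d := j - i - 1 with hd
    apply hmin (m - d) (by omega)
    refine ⟨fun t => if t ≤ i then g t else g (t + d), by simp [hg0], ?_, fun t ht => ?_,
      fun t ht => ?_⟩
    · have : ¬ (m - d ≤ i) := by omega
      simp only [if_neg this]
      rw [show m - d + d = m by omega]
      exact hgm
    · by_cases h' : t ≤ i
      · simp only [if_pos h']; exact hgmem t (by omega)
      · simp only [if_neg h']; exact hgmem (t + d) (by omega)
    · by_cases h' : t < i
      · simp only [if_pos (le_of_lt h'), if_pos (by omega : t + 1 ≤ i)]
        exact hgadj t (by omega)
      · by_cases h'' : t = i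
        · subst h''
          simp only [if_pos le_rfl, if_neg (by omega : ¬ t + 1 ≤ t)]
          rw [show t + 1 + d = j by omega]
          exact hnon
        · simp only [if_neg (by omega : ¬ t ≤ i), if_neg (by omega : ¬ t + 1 ≤ i)]
          rw [show t + 1 + d = t + d + 1 by omega]
          exact hgadj (t + d) (by omega)
  have hm2 : 2 ≤ m := by
    rcases Nat.lt_or_ge m 2 with h' | h'
    · interval_cases m
      · exact absurd (hg0 ▸ hgm ▸ rfl : h₁ = h₂) hne
      · have := hgadj 0 (by norm_num)
        rw [hg0, show (0:ℕ)+1 = 1 from rfl, hgm] at this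
        rw [hdisj] at this
        exact absurd this (by simp)
    · exact h'
  -- intersection vertices
  have hwex : ∀ i < m, ∃ x, g i ∩ g (i + 1) = {x} := by
    intro i hi
    apply Finset.card_eq_one.mp
    have hle := tree_linear hT (g i) (hgmem i (by omega)) (g (i+1)) (hgmem (i+1) (by omega))
      (hne_cons i hi)
    have hge : 1 ≤ (g i ∩ g (i+1)).card := Finset.card_pos.mpr (hgadj i hi)
    omega
  let w : ℕ → V := fun i => if h : i < m then (hwex i h).choose else v
  have hw : ∀ i < m, g i ∩ g (i + 1) = {w i} := by
    intro i hi
    simp only [w, dif_pos hi]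
    exact (hwex i hi).choose_spec
  have hwmem : ∀ i < m, w i ∈ g i ∧ w i ∈ g (i + 1) := by
    intro i hi
    have : w i ∈ g i ∩ g (i + 1) := by rw [hw i hi]; exact Finset.mem_singleton_self _
    exact Finset.mem_inter.mp this
  -- choose the supporting pairs
  have hw0h1 : w 0 ∈ h₁ := hg0 ▸ (hwmem 0 (by omega)).1
  have hwmh2 : w (m - 1) ∈ h₂ := by
    have := (hwmem (m - 1) (by omega)).2
    rwa [show m - 1 + 1 = m by omega, hgm] at this
  obtain ⟨p₁, hp₁sub, hp₁card, hp₁E, hp₁w⟩ := pick h₁ hh1 hsupp1 (w 0) hw0h1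
  obtain ⟨p₂, hp₂sub, hp₂card, hp₂E, hp₂w⟩ := pick h₂ hh2 hsupp2 (w (m-1)) hwmh2
  set e₁ := insert v p₁ with he₁
  set e₂ := insert v p₂ with he₂
  -- basic facts
  have hvg : ∀ i ≤ m, v ∉ g i := fun i hi hvi => hvS (tree_subset hT (g i) (hgmem i hi) hvi)
  have hvh1 : v ∉ h₁ := hvh1a
  have hvh2 : v ∉ h₂ := hvh2a
  have hvp1 : v ∉ p₁ := fun h => hvh1 (hp₁sub h)
  have hvp2 : v ∉ p₂ := fun h => hvh2 (hp₂sub h)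
  have hwS : ∀ i < m, w i ∈ S := fun i hi => tree_subset hT (g i) (hgmem i (by omega)) (hwmem i hi).1
  have hp1p2 : p₁ ∩ p₂ = ∅ := by
    rw [← Finset.subset_empty, ← hdisj]
    exact Finset.inter_subset_inter hp₁sub hp₂sub
  -- the cycle
  apply hcyc
  unfold HasLinearCycle IsLinearCycle
  set k := m + 1 with hk
  haveI : NeZero k := ⟨Nat.succ_ne_zero m⟩
  set F : ℕ → Finset V := fun i => if i = 0 then e₁ else if i = m then e₂ else g i with hF
  set Wn : ℕ → V := fun i => if i = 0 then v else w (i - 1) with hWn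
  have hvalcast : ∀ t : ZMod k, ((t.val : ℕ) : ZMod k) = t := fun t =>
    ZMod.natCast_rightInverse t
  have hvalinj : ∀ s t : ZMod k, s.val = t.val → s = t := by
    intro s t hst
    rw [← hvalcast s, ← hvalcast t, hst]
  have hvallt : ∀ t : ZMod k, t.val ≤ m := by
    intro t
    have := ZMod.val_lt t
    omega
  have hvalsucc : ∀ t : ZMod k, (t + 1).val = if t.val = m then 0 else t.val + 1 := by
    intro t
    have h1 : t + 1 = ((t.val + 1 : ℕ) : ZMod k) := by
      rw [Nat.cast_add, Nat.cast_one, hvalcast]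
    by_cases heq : t.val = m
    · rw [h1, heq, show ((m + 1 : ℕ) : ZMod k) = 0 by rw [← hk]; exact ZMod.natCast_self k,
        if_pos rfl, ZMod.val_zero]
    · rw [h1, if_neg heq, ZMod.val_cast_of_lt (by have := hvallt t; omega)]
  -- values of F
  have hF0 : F 0 = e₁ := by simp [hF]
  have hFm : F m = e₂ := by simp [hF]; omega
  have hFi : ∀ i, 1 ≤ i → i ≤ m - 1 → F i = g i := by
    intro i hi1 hi2
    simp only [hF]
    rw [if_neg (by omega), if_neg (by omega)]
  have hWn0 : Wn 0 = v := by simp [hWn]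
  have hWni : ∀ i, 1 ≤ i → Wn i = w (i - 1) := by
    intro i hi
    simp only [hWn]
    rw [if_neg (by omega)]
  -- the three special intersections
  have hkey1 : e₂ ∩ e₁ = {v} := by
    ext x
    simp only [he₁, he₂, Finset.mem_inter, Finset.mem_insert, Finset.mem_singleton]
    constructor
    · rintro ⟨h2x | h2x, h1x | h1x⟩
      · exact h2x
      · exact h2x
      · exact h1x
      · exfalso
        have : x ∈ p₁ ∩ p₂ := Finset.mem_inter.mpr ⟨h1x, h2x⟩
        rw [hp1p2] at this
        exact Finset.notMem_empty x this
    · rintro rfl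
      exact ⟨Or.inl rfl, Or.inl rfl⟩
  have hkey2 : e₁ ∩ g 1 = {w 0} := by
    apply Finset.Subset.antisymm
    · intro x hx
      rcases Finset.mem_inter.mp hx with ⟨hx1, hx2⟩
      rcases Finset.mem_insert.mp hx1 with rfl | hx1
      · exact absurd hx2 (hvg 1 (by omega))
      · have : x ∈ g 0 ∩ g 1 := Finset.mem_inter.mpr ⟨hg0 ▸ hp₁sub hx1, hx2⟩
        rwa [hw 0 (by omega)] at this
    · rw [Finset.singleton_subset_iff]
      exact Finset.mem_inter.mpr ⟨Finset.mem_insert_of_mem hp₁w, (hwmem 0 (by omega)).2⟩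
  have hkey3 : g (m - 1) ∩ e₂ = {w (m - 1)} := by
    apply Finset.Subset.antisymm
    · intro x hx
      rcases Finset.mem_inter.mp hx with ⟨hx1, hx2⟩
      rcases Finset.mem_insert.mp hx2 with rfl | hx2
      · exact absurd hx1 (hvg (m - 1) (by omega))
      · have hx3 : x ∈ g (m - 1) ∩ g m := Finset.mem_inter.mpr ⟨hx1, hgm ▸ hp₂sub hx2⟩
        have h5 := hw (m - 1) (by omega)
        rw [show m - 1 + 1 = m by omega] at h5
        rwa [h5] at hx3
    · rw [Finset.singleton_subset_iff]
      refine Finset.mem_inter.mpr ⟨(hwmem (m - 1) (by omega)).1, Finset.mem_insert_of_mem hp₂w⟩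
  -- disjointness for far-apart F values
  have claimF_disj : ∀ a b, a < b → b ≤ m → b ≠ a + 1 → ¬(a = 0 ∧ b = m) → F a ∩ F b = ∅ := by
    intro a b hab hbm hba1 hnab
    by_cases ha0 : a = 0
    · subst ha0
      have hbm' : b ≤ m - 1 := by
        rcases Nat.lt_or_ge b m with h' | h'
        · omega
        · exact absurd ⟨rfl, by omega⟩ hnab
      rw [hF0, hFi b (by omega) hbm']
      apply Finset.eq_empty_iff_forall_notMem.mpr
      intro x hx
      rcases Finset.mem_inter.mp hx with ⟨hx1, hx2⟩
      rcases Finset.mem_insert.mp hx1 with rfl | hx1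
      · exact hvg b (by omega) hx2
      · have : x ∈ g 0 ∩ g b := Finset.mem_inter.mpr ⟨hg0 ▸ hp₁sub hx1, hx2⟩
        rw [hfar 0 b (by omega) (by omega)] at this
        exact Finset.notMem_empty x this
    · by_cases hbm2 : b = m
      · subst hbm2
        rw [hFm, hFi a (by omega) (by omega)]
        apply Finset.eq_empty_iff_forall_notMem.mpr
        intro x hx
        rcases Finset.mem_inter.mp hx with ⟨hx1, hx2⟩
        rcases Finset.mem_insert.mp hx2 with rfl | hx2
        · exact hvg a (by omega) hx1
        · have : x ∈ g a ∩ g m := Finset.mem_inter.mpr ⟨hx1, hgm ▸ hp₂sub hx2⟩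
          rw [hfar a m (by omega) (by omega)] at this
          exact Finset.notMem_empty x this
      · rw [hFi a (by omega) (by omega), hFi b (by omega) (by omega)]
        exact hfar a b (by omega) (by omega)
  refine ⟨k, fun t => Wn t.val, fun t => F t.val, by omega, ?_, ?_, ?_, ?_, ?_⟩
  · -- injectivity of the vertex map
    have claimW : ∀ a b, a < b → b ≤ m → Wn a ≠ Wn b := by
      intro a b hab hbm
      by_cases ha0 : a = 0
      · subst ha0
        rw [hWn0, hWni b (by omega)]
        intro heq
        exact hvS (heq ▸ hwS (b - 1) (by omega))
      · rw [hWni a (by omega), hWni b (by omega)]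
        intro heq
        have h1 : w (a - 1) ∈ g (a - 1) := (hwmem (a - 1) (by omega)).1
        have h2 : w (b - 1) ∈ g b := by
          have := (hwmem (b - 1) (by omega)).2
          rwa [show b - 1 + 1 = b by omega] at this
        have : w (a - 1) ∈ g (a - 1) ∩ g b := Finset.mem_inter.mpr ⟨h1, heq ▸ h2⟩
        rw [hfar (a - 1) b (by omega) (by omega)] at this
        exact Finset.notMem_empty _ this
    intro s t hst
    simp only at hst
    apply hvalinj
    rcases lt_trichotomy s.val t.val with h' | h' | h'
    · exact absurd hst (claimW s.val t.val h' (hvallt t))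
    · exact h'
    · exact absurd hst.symm (claimW t.val s.val h' (hvallt s))
  · -- injectivity of the edge map
    have claimF : ∀ a b, a < b → b ≤ m → F a ≠ F b := by
      intro a b hab hbm
      by_cases ha0 : a = 0
      · subst ha0
        by_cases hbm2 : b = m
        · subst hbm2
          rw [hF0, hFm]
          intro heq
          have hpp : p₁ = p₂ := by
            have := congrArg (fun s => Finset.erase s v) heq
            simpa [he₁, he₂, Finset.erase_insert hvp1, Finset.erase_insert hvp2] using this
          obtain ⟨x, hx⟩ := Finset.card_pos.mp (by omega : 0 < p₁.card)
          have : x ∈ p₁ ∩ p₂ := Finset.mem_inter.mpr ⟨hx, hpp ▸ hx⟩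
          rw [hp1p2] at this
          exact Finset.notMem_empty x this
        · rw [hF0, hFi b (by omega) (by omega)]
          intro heq
          exact hvg b (by omega) (heq ▸ Finset.mem_insert_self v p₁)
      · by_cases hbm2 : b = m
        · subst hbm2
          rw [hFm, hFi a (by omega) (by omega)]
          intro heq
          exact hvg a (by omega) (heq.symm ▸ Finset.mem_insert_self v p₂)
        · rw [hFi a (by omega) (by omega), hFi b (by omega) (by omega)]
          by_cases hba : b = a + 1
          · subst hba
            exact hne_cons a (by omega)
          · intro heq
            have h1 : (g a).card = 3 := h3 _ (hTE (hgmem a (by omega)))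
            have h2 : g a ∩ g b = g a := by rw [heq, Finset.inter_self]
            rw [hfar a b (by omega) (by omega)] at h2
            rw [← h2] at h1
            simp at h1
    intro s t hst
    simp only at hst
    apply hvalinj
    rcases lt_trichotomy s.val t.val with h' | h' | h'
    · exact absurd hst (claimF s.val t.val h' (hvallt t))
    · exact h'
    · exact absurd hst.symm (claimF t.val s.val h' (hvallt s))
  · -- edges of the cycle are hyperedges
    intro t
    show F t.val ∈ E
    by_cases h0 : t.val = 0
    · rw [h0, hF0]; exact hp₁E
    · by_cases hm' : t.val = m
      · rw [hm', hFm]; exact hp₂E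
      · rw [hFi t.val (by omega) (by have := hvallt t; omega)]
        exact hTE (hgmem t.val (hvallt t))
  · -- consecutive intersections
    intro t
    simp only
    rw [hvalsucc t]
    by_cases ham : t.val = m
    · rw [ham, if_pos rfl, hFm, hF0, hWn0]
      exact hkey1
    · rw [if_neg ham]
      have hta : t.val < m := by have := hvallt t; omega
      rw [hWni (t.val + 1) (by omega), Nat.add_sub_cancel]
      by_cases ha0 : t.val = 0
      · rw [ha0, hF0, hFi 1 le_rfl (by omega)]
        exact hkey2
      · by_cases ham1 : t.val = m - 1
        · rw [ham1, hFi (m - 1) (by omega) le_rfl, show m - 1 + 1 = m by omega, hFm]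
          exact hkey3
        · rw [hFi t.val (by omega) (by omega), hFi (t.val + 1) (by omega) (by omega)]
          exact hw t.val hta
  · -- non-consecutive disjointness
    intro s t hst hs1 ht1
    simp only
    have hab : s.val ≠ t.val := fun h => hst (hvalinj _ _ h)
    have hs1' : ¬ (if s.val = m then 0 else s.val + 1) = t.val := by
      intro h
      apply hs1
      apply hvalinj
      rw [hvalsucc s, h]
    have ht1' : ¬ (if t.val = m then 0 else t.val + 1) = s.val := by
      intro h
      apply ht1
      apply hvalinj
      rw [hvalsucc t, h]
    rcases lt_trichotomy s.val t.val with h' | h' | h'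
    · apply claimF_disj s.val t.val h' (hvallt t)
      · intro h
        by_cases hsm : s.val = m
        · have := hvallt t; omega
        · rw [if_neg hsm] at hs1'; omega
      · rintro ⟨h1, h2⟩
        rw [if_pos h2] at ht1'
        omega
    · exact absurd h' hab
    · rw [Finset.inter_comm]
      apply claimF_disj t.val s.val h' (hvallt s)
      · intro h
        by_cases htm : t.val = m
        · have := hvallt s; omega
        · rw [if_neg htm] at ht1'; omega
      · rintro ⟨h1, h2⟩
        rw [if_pos h2] at hs1'
        omega
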